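/- For every real symmetric positive definite 3×3 matrix X, the trace of A(X) equals 1/√(det X); that is, tr( (1/2)·∫₀^∞ (X + s·I)⁻¹ / √(det(X + s·I)) ds ) = (det X)^(−1/2). -/

import Mathlib

open Matrix MeasureTheory

noncomputable section

/-- 3×3 real matrices. -/
abbrev Mat3 := Matrix (Fin 3) (Fin 3) ℝ

/-- Rank-4 tensors on ℝ³. -/
abbrev Tens4 := Fin 3 → Fin 3 → Fin 3 → Fin 3 → ℝ

/-- Tensor (outer) product of two matrices: `(K ⊗ L)_{ijkl} = K_{ij} L_{kl}`. -/
def otimes (K L : Mat3) : Tens4 := fun i j k l => K i j * L k l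

/-- Symmetrization of a rank-4 tensor: the average over all 24 permutations of the indices. -/
def symmetrize (T : Tens4) : Tens4 := fun i j k l =>
  (∑ σ : Equiv.Perm (Fin 4),
      T (![i, j, k, l] (σ 0)) (![i, j, k, l] (σ 1)) (![i, j, k, l] (σ 2)) (![i, j, k, l] (σ 3)))
    / 24

/-- Contraction of a rank-4 tensor with a matrix: `(𝔹:M)_{ij} = Σ_{k,l} 𝔹_{ijkl} M_{kl}`. -/
def contr (T : Tens4) (M : Mat3) : Mat3 :=
  Matrix.of fun i j => ∑ k, ∑ l, T i j k l * M k l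

/-- Full contraction `N:𝔹:M = Σ_{i,j,k,l} N_{ij} 𝔹_{ijkl} M_{kl}`. -/
def dcontr (N : Mat3) (T : Tens4) (M : Mat3) : ℝ :=
  ∑ i, ∑ j, ∑ k, ∑ l, N i j * T i j k l * M k l

/-- The matrix `(B + s·I)⁻¹` (matrix inverse). -/
def res (B : Mat3) (s : ℝ) : Mat3 := (B + s • (1 : Mat3))⁻¹

/-- `A(B) = (1/2)·∫₀^∞ (B + s·I)⁻¹ / √(det(B + s·I)) ds`, entrywise. -/
def Amat (B : Mat3) : Mat3 :=
  Matrix.of fun i j =>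
    (1 / 2) * ∫ s in Set.Ioi (0 : ℝ),
      res B s i j / Real.sqrt (B + s • (1 : Mat3)).det

/-- `𝔸(B) = (3/4)·∫₀^∞ s·S((B+sI)⁻¹ ⊗ (B+sI)⁻¹) / √(det(B+sI)) ds`, entrywise. -/
def Atens (B : Mat3) : Tens4 := fun i j k l =>
  (3 / 4) * ∫ s in Set.Ioi (0 : ℝ),
    s * symmetrize (otimes (res B s) (res B s)) i j k l
      / Real.sqrt (B + s • (1 : Mat3)).det

/-- `ℂ(B) = (3/4)·∫₀^∞ S((B+sI)⁻¹ ⊗ (B+sI)⁻¹) / √(det(B+sI)) ds`, entrywise. -/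
def Ctens (B : Mat3) : Tens4 := fun i j k l =>
  (3 / 4) * ∫ s in Set.Ioi (0 : ℝ),
    symmetrize (otimes (res B s) (res B s)) i j k l
      / Real.sqrt (B + s • (1 : Mat3)).det

end

open Filter Polynomial

noncomputable def detPoly (X : Mat3) : Polynomial ℝ :=
  Polynomial.X ^ 3
    + Polynomial.C (X 0 0 + X 1 1 + X 2 2) * Polynomial.X ^ 2
    + Polynomial.C (X 0 0 * X 1 1 - X 0 1 * X 1 0 + X 0 0 * X 2 2 - X 0 2 * X 2 0
        + X 1 1 * X 2 2 - X 1 2 * X 2 1) * Polynomial.X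
    + Polynomial.C X.det

lemma detPoly_eval (X : Mat3) (s : ℝ) : (detPoly X).eval s = (X + s • (1 : Mat3)).det := by
  simp [detPoly, Matrix.det_fin_three, Matrix.add_apply, Matrix.smul_apply, Matrix.one_apply]
  ring

lemma detPoly_deriv_eval (X : Mat3) (s : ℝ) :
    (detPoly X).derivative.eval s = ((X + s • (1 : Mat3)).adjugate).trace := by
  simp [detPoly, Matrix.adjugate_fin_three, Matrix.trace_fin_three, Matrix.add_apply,
    Matrix.smul_apply, Matrix.one_apply]
  ring

lemma detPoly_monic (X : Mat3) : (detPoly X).Monic := by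
  unfold detPoly; monicity!

lemma detPoly_natDegree (X : Mat3) : (detPoly X).natDegree = 3 := by
  unfold detPoly; compute_degree!

lemma posDef_shift {X : Mat3} (hX : X.PosDef) {s : ℝ} (hs : 0 ≤ s) :
    (X + s • (1 : Mat3)).PosDef := by
  have h1 : (s • (1 : Mat3)) = Matrix.diagonal (fun _ => s) := by
    ext i j; by_cases h : i = j <;> simp [Matrix.one_apply, h]
  exact hX.add_posSemidef (h1 ▸ Matrix.PosSemidef.diagonal fun _ => hs)

lemma diag_pos {A : Mat3} (hA : A.PosDef) (i : Fin 3) : 0 < A i i := by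
  exact hA.diag_pos

lemma tendsto_sqrt_atTop' : Filter.Tendsto Real.sqrt atTop atTop :=
  tendsto_atTop_atTop_of_monotone (fun _ _ h => Real.sqrt_le_sqrt h)
    (fun b => ⟨b ^ 2, by rw [Real.sqrt_sq_eq_abs]; exact le_abs_self b⟩)

lemma res_apply (X : Mat3) (s : ℝ) (i j : Fin 3) :
    res X s i j = ((X + s • (1 : Mat3)).det)⁻¹ * (X + s • (1 : Mat3)).adjugate i j := by
  rw [res, Matrix.inv_def, Ring.inverse_eq_inv']
  simp [Matrix.smul_apply]

lemma res_trace (X : Mat3) (s : ℝ) :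
    (res X s).trace = ((X + s • (1 : Mat3)).det)⁻¹ * ((X + s • (1 : Mat3)).adjugate).trace := by
  rw [res, Matrix.inv_def, Ring.inverse_eq_inv', Matrix.trace_smul, smul_eq_mul]


theorem trace_Amat_eq_inv_sqrt_det (X : Mat3) (hX : X.PosDef) :
    (Amat X).trace = 1 / Real.sqrt X.det := by
  classical
  set D : ℝ → ℝ := fun s => (X + s • (1 : Mat3)).det with hDdef
  have hDpos : ∀ s ∈ Set.Ici (0 : ℝ), 0 < D s := fun s hs => (posDef_shift hX hs).det_pos
  have hDeval : ∀ s, D s = (detPoly X).eval s := fun s => (detPoly_eval X s).symm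
  set g : ℝ → ℝ := fun s => -2 * (Real.sqrt (D s))⁻¹ with hgdef
  set G : ℝ → ℝ := fun s => (res X s).trace / Real.sqrt (D s) with hGdef
  have hresTr : ∀ s ∈ Set.Ici (0 : ℝ),
      (res X s).trace = (detPoly X).derivative.eval s / D s := by
    intro s hs
    rw [res_trace, ← detPoly_deriv_eval]
    rw [div_eq_inv_mul]
  have hderiv : ∀ s ∈ Set.Ici (0 : ℝ), HasDerivAt g (G s) s := by
    intro s hs
    have hpos := hDpos s hs
    have hsqpos : 0 < Real.sqrt (D s) := Real.sqrt_pos.2 hpos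
    have h1 : HasDerivAt D ((detPoly X).derivative.eval s) s := by
      have h := (detPoly X).hasDerivAt s
      exact h.congr_of_eventuallyEq (Filter.Eventually.of_forall fun t => hDeval t)
    have h2 : HasDerivAt (fun t => Real.sqrt (D t))
        ((detPoly X).derivative.eval s / (2 * Real.sqrt (D s))) s := h1.sqrt hpos.ne'
    have h3 := (h2.inv hsqpos.ne').const_mul (-2 : ℝ)
    convert h3 using 1
    · rfl
    · rfl
    · rfl
    rw [hGdef]
    simp only
    rw [hresTr s hs]
    have hsqsq : Real.sqrt (D s) * Real.sqrt (D s) = D s := Real.mul_self_sqrt hpos.le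
    field_simp
    ring_nf
    rw [Real.sq_sqrt hpos.le]
  have hGnonneg : ∀ s ∈ Set.Ioi (0 : ℝ), 0 ≤ G s := by
    intro s hs
    have hMpos := posDef_shift hX (le_of_lt hs)
    have hres : (res X s).PosDef := hMpos.inv
    have htr : 0 < (res X s).trace := by
      rw [Matrix.trace]
      exact Finset.sum_pos (fun i _ => diag_pos hres i) ⟨0, Finset.mem_univ 0⟩
    exact le_of_lt (div_pos htr (Real.sqrt_pos.2 (hDpos s (Set.mem_Ici.2 (le_of_lt hs)))))
  have htend : Filter.Tendsto g Filter.atTop (nhds 0) := by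
    have hdeg : 0 < (detPoly X).degree := by
      rw [Polynomial.degree_eq_natDegree (detPoly_monic X).ne_zero, detPoly_natDegree]
      norm_num
    have hDtop : Filter.Tendsto D Filter.atTop Filter.atTop := by
      have h := Polynomial.tendsto_atTop_of_leadingCoeff_nonneg (detPoly X) hdeg
        (by rw [(detPoly_monic X).leadingCoeff]; norm_num)
      exact h.congr fun t => (hDeval t).symm
    have h := (tendsto_inv_atTop_zero.comp (tendsto_sqrt_atTop'.comp hDtop)).const_mul (-2 : ℝ)
    rw [hgdef]
    simpa using h
  have hint : ∫ s in Set.Ioi (0 : ℝ), G s = 0 - g 0 :=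
    MeasureTheory.integral_Ioi_of_hasDerivAt_of_nonneg' hderiv hGnonneg htend
  have hIntG : MeasureTheory.IntegrableOn G (Set.Ioi 0) :=
    MeasureTheory.integrableOn_Ioi_deriv_of_nonneg' hderiv hGnonneg htend
  -- continuity facts
  have hMc : Continuous (fun s : ℝ => X + s • (1 : Mat3)) :=
    continuous_const.add (continuous_id.smul continuous_const)
  have hdetc : Continuous D := hMc.matrix_det
  -- per-entry integrability
  have hIntEntry : ∀ i : Fin 3, MeasureTheory.IntegrableOn
      (fun s : ℝ => res X s i i / Real.sqrt (X + s • (1 : Mat3)).det) (Set.Ioi 0) := by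
    intro i
    have hadjc : Continuous (fun s : ℝ => (X + s • (1 : Mat3)).adjugate i i) :=
      (hMc.matrix_adjugate).matrix_elem i i
    have hcont : ContinuousOn
        (fun s : ℝ => res X s i i / Real.sqrt (X + s • (1 : Mat3)).det) (Set.Ioi 0) := by
      have : ContinuousOn
          (fun s : ℝ => ((D s)⁻¹ * (X + s • (1 : Mat3)).adjugate i i) / Real.sqrt (D s))
          (Set.Ioi 0) := by
        apply ContinuousOn.div
        · exact (hdetc.continuousOn.inv₀
            (fun s hs => (hDpos s (Set.mem_Ici.2 (le_of_lt hs))).ne')).mul hadjc.continuousOn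
        · exact (Real.continuous_sqrt.comp hdetc).continuousOn
        · exact fun s hs => (Real.sqrt_pos.2 (hDpos s (Set.mem_Ici.2 (le_of_lt hs)))).ne'
      exact this.congr fun s hs => by rw [res_apply]
    refine MeasureTheory.Integrable.mono' hIntG
      (hcont.aestronglyMeasurable measurableSet_Ioi) ?_
    rw [MeasureTheory.ae_restrict_iff' measurableSet_Ioi]
    refine Filter.Eventually.of_forall fun s hs => ?_
    have hres : (res X s).PosDef := (posDef_shift hX (le_of_lt hs)).inv
    have hsqpos : 0 < Real.sqrt (D s) := Real.sqrt_pos.2 (hDpos s (Set.mem_Ici.2 (le_of_lt hs)))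
    have h1 : 0 ≤ res X s i i / Real.sqrt (X + s • (1 : Mat3)).det :=
      le_of_lt (div_pos (diag_pos hres i) hsqpos)
    rw [Real.norm_eq_abs, abs_of_nonneg h1]
    have h2 : res X s i i ≤ (res X s).trace := by
      rw [Matrix.trace]
      exact Finset.single_le_sum (f := fun j => (res X s).diag j)
        (fun j _ => le_of_lt (diag_pos hres j)) (Finset.mem_univ i)
    exact (div_le_div_iff_of_pos_right hsqpos).mpr h2
  -- assemble
  have hAmatTr : (Amat X).trace
      = ∑ i : Fin 3, (1 / 2 : ℝ) * ∫ s in Set.Ioi (0 : ℝ),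
          res X s i i / Real.sqrt (X + s • (1 : Mat3)).det := by
    simp [Matrix.trace, Matrix.diag, Amat]
  rw [hAmatTr, ← Finset.mul_sum,
    ← MeasureTheory.integral_finset_sum _ (fun i _ => hIntEntry i)]
  have hsum : ∀ s : ℝ, (∑ i : Fin 3, res X s i i / Real.sqrt (X + s • (1 : Mat3)).det) = G s := by
    intro s
    rw [hGdef]
    simp only
    rw [Matrix.trace, Finset.sum_div]
    rfl
  rw [show (∫ s in Set.Ioi (0 : ℝ),
      ∑ i : Fin 3, res X s i i / Real.sqrt (X + s • (1 : Mat3)).det)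
      = ∫ s in Set.Ioi (0 : ℝ), G s from
    MeasureTheory.integral_congr_ae (Filter.Eventually.of_forall fun s => hsum s), hint]
  have hD0 : D 0 = X.det := by simp [hDdef]
  rw [hgdef]
  simp only [hD0]
  rw [one_div]
  ring
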